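/- Let F be a graph with an (r+1)-coloring having a color class of size s and another color class of size t. Let G be a graph whose vertex set is partitioned into parts A_1, ..., A_r, each of size at least |V(F)|^2, such that every vertex of A_i is adjacent to all but at most |A_j|/|V(F)| vertices of A_j for every j ≠ i. If G contains a copy of K_{s,t} with both sides inside some single part A_i, then G contains a copy of F. -/

import Mathlib

open SimpleGraph Finset

/-- `G` contains a copy of `F`. -/
def Graph.Contains {α β : Type*} (F : SimpleGraph α) (G : SimpleGraph β) : Prop :=
  ∃ f : α ↪ β, ∀ ⦃a b : α⦄, F.Adj a b → G.Adj (f a) (f b)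

/-- The number of subgraphs of `G` isomorphic to `H`, i.e. `N(H, G)`. -/
noncomputable def Graph.copyCount {α β : Type*} (H : SimpleGraph α) (G : SimpleGraph β) : ℕ :=
  Set.ncard {G' : G.Subgraph | Nonempty (H ≃g G'.coe)}

/-- The join `G + G'` of two graphs. -/
def Graph.join {α β : Type*} (G : SimpleGraph α) (H : SimpleGraph β) :
    SimpleGraph (α ⊕ β) where
  Adj x y :=
    match x, y with
    | Sum.inl a, Sum.inl b => G.Adj a b
    | Sum.inr a, Sum.inr b => H.Adj a b
    | Sum.inl _, Sum.inr _ => True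
    | Sum.inr _, Sum.inl _ => True
  symm := ⟨by rintro (a | a) (b | b) h <;> simp_all <;> exact h.symm⟩
  loopless := ⟨by rintro (a | a) h <;> simp_all⟩

/-- `s` is the minimum size of a color class over proper `(r+1)`-colorings of `F` (σ(F) = s). -/
def Graph.IsSigma {α : Type*} (F : SimpleGraph α) (r s : ℕ) : Prop :=
  IsLeast {k : ℕ | ∃ (C : F.Coloring (Fin (r + 1))) (i : Fin (r + 1)),
    k = {v | C v = i}.ncard} s


private lemma stmt_1_arith (N A T₁ T₂ Tu : ℝ) (hN : 1 ≤ N) (hA : N ^ 2 ≤ A)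
    (h1 : T₁ ≤ N - 1) (h2 : T₂ ≤ (N - 1) * (A / N)) (hu : Tu ≤ T₁ + T₂) : Tu < A := by
  have hN0 : 0 < N := by linarith
  have hq : A / N * N = A := div_mul_cancel₀ _ (ne_of_gt hN0)
  have hqn : N ≤ A / N := by rw [le_div_iff₀ hN0]; nlinarith
  nlinarith [hqn, hq, hN0]

set_option maxHeartbeats 1000000 in
/-- if `F` has an `(r+1)`-coloring with classes of sizes `s` and `t`, `G` is
partitioned into `r` parts, each large, with almost-complete bipartite graphs between parts,
and some part contains a `K_{s,t}`, then `G` contains `F`. -/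
theorem stmt_1 {γ V : Type*} [Fintype γ] [Fintype V] (F : SimpleGraph γ) (r s t : ℕ)
    (C : F.Coloring (Fin (r + 1))) (c₁ c₂ : Fin (r + 1)) (hc : c₁ ≠ c₂)
    (hs : {v | C v = c₁}.ncard = s) (ht : {v | C v = c₂}.ncard = t)
    (G : SimpleGraph V) (P : V → Fin r)
    (hsize : ∀ i, (Fintype.card γ) ^ 2 ≤ {v | P v = i}.ncard)
    (hadj : ∀ i j, i ≠ j → ∀ v, P v = i →
      ({u | P u = j ∧ ¬ G.Adj v u}.ncard : ℝ) ≤ ({u | P u = j}.ncard : ℝ) / (Fintype.card γ))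
    (i : Fin r)
    (hK : Graph.Contains (completeBipartiteGraph (Fin s) (Fin t))
      (G.induce {v | P v = i})) :
    Graph.Contains F G := by
  classical
  set n := Fintype.card γ with hnγ
  -- trivial case: γ empty
  rcases Nat.eq_zero_or_pos n with hn | hn
  · haveI : IsEmpty γ := Fintype.card_eq_zero_iff.mp hn
    exact ⟨Function.Embedding.ofIsEmpty, fun a => isEmptyElim a⟩
  -- the part-assignment map π
  obtain ⟨π, hπ₁, hπ₂, hπ₃, hπ₄⟩ : ∃ π : Fin (r + 1) → Fin r, π c₁ = i ∧ π c₂ = i ∧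
      (∀ c, c ≠ c₁ → c ≠ c₂ → π c ≠ i) ∧
      (∀ c c', c ≠ c₁ → c ≠ c₂ → c' ≠ c₁ → c' ≠ c₂ → π c = π c' → c = c') := by
    have hcard : (({c₁, c₂}ᶜ : Finset (Fin (r + 1))).card = ({i}ᶜ : Finset (Fin r)).card) := by
      rw [Finset.card_compl, Finset.card_compl]
      rw [Finset.card_insert_of_notMem (by simpa using hc), Finset.card_singleton]
      simp
    have e := Finset.equivOfCardEq hcard
    refine ⟨fun c => if h : c = c₁ ∨ c = c₂ then i else (e ⟨c, by simp [not_or.mp h]⟩ : Fin r),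
      by simp, by simp, ?_, ?_⟩
    · intro c h1 h2
      dsimp only
      rw [dif_neg (not_or.mpr ⟨h1, h2⟩)]
      have h3 := (e ⟨c, by simp [h1, h2]⟩).2
      rw [Finset.mem_compl, Finset.mem_singleton] at h3
      exact h3
    · intro c c' h1 h2 h1' h2' heq
      dsimp only at heq
      rw [dif_neg (not_or.mpr ⟨h1, h2⟩), dif_neg (not_or.mpr ⟨h1', h2'⟩)] at heq
      have := e.injective (Subtype.ext heq)
      exact congrArg Subtype.val this
  -- a base point in part i
  have hne : {v | P v = i}.Nonempty := by
    apply Set.nonempty_of_ncard_ne_zero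
    have h1 := hsize i
    have h2 : 0 < n ^ 2 := pow_pos hn 2
    omega
  obtain ⟨v₀, hv₀⟩ := hne
  -- the base embedding on the classes c₁, c₂
  obtain ⟨g, hg⟩ := hK
  have hsF : (univ.filter fun v => C v = c₁).card = s := by
    rw [← hs]
    rw [show {v | C v = c₁} = ↑(univ.filter fun v => C v = c₁) by ext; simp,
      Set.ncard_coe_finset]
  have htF : (univ.filter fun v => C v = c₂).card = t := by
    rw [← ht]
    rw [show {v | C v = c₂} = ↑(univ.filter fun v => C v = c₂) by ext; simp,
      Set.ncard_coe_finset]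
  have eS := Finset.equivFinOfCardEq hsF
  have eT := Finset.equivFinOfCardEq htF
  set f₀ : γ → V := fun v =>
    if h1 : C v = c₁ then ↑(g (Sum.inl (eS ⟨v, by simp [h1]⟩)))
    else if h2 : C v = c₂ then ↑(g (Sum.inr (eT ⟨v, by simp [h2]⟩)))
    else v₀ with hf₀
  have hf₀P : ∀ v, C v = c₁ ∨ C v = c₂ → P (f₀ v) = i := by
    intro v hv
    rcases hv with h1 | h2
    · rw [hf₀]; simp only [dif_pos h1]
      exact (g (Sum.inl (eS ⟨v, by simp [h1]⟩))).2
    · have h1 : ¬ C v = c₁ := by rw [h2]; exact fun h => hc h.symm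
      rw [hf₀]; simp only [dif_neg h1, dif_pos h2]
      exact (g (Sum.inr (eT ⟨v, by simp [h2]⟩))).2
  have hf₀inj : ∀ v w, C v = c₁ ∨ C v = c₂ → C w = c₁ ∨ C w = c₂ → f₀ v = f₀ w → v = w := by
    intro v w hv hw heq
    rcases hv with h1 | h2 <;> rcases hw with h1' | h2'
    · rw [hf₀] at heq; simp only [dif_pos h1, dif_pos h1'] at heq
      have := g.injective (Subtype.ext heq)
      have := eS.injective (Sum.inl.inj this)
      exact congrArg Subtype.val this
    · exfalso
      have hv1 : ¬ C v = c₂ := by rw [h1]; exact hc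
      rw [hf₀] at heq
      simp only [dif_pos h1, dif_neg (show ¬ C w = c₁ by rw [h2']; exact fun h => hc h.symm),
        dif_pos h2'] at heq
      have := g.injective (Subtype.ext heq)
      simp at this
    · exfalso
      rw [hf₀] at heq
      simp only [dif_pos h1', dif_neg (show ¬ C v = c₁ by rw [h2]; exact fun h => hc h.symm),
        dif_pos h2] at heq
      have := g.injective (Subtype.ext heq)
      simp at this
    · rw [hf₀] at heq
      simp only [dif_neg (show ¬ C v = c₁ by rw [h2]; exact fun h => hc h.symm), dif_pos h2,
        dif_neg (show ¬ C w = c₁ by rw [h2']; exact fun h => hc h.symm), dif_pos h2'] at heq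
      have := g.injective (Subtype.ext heq)
      have := eT.injective (Sum.inr.inj this)
      exact congrArg Subtype.val this
  have hf₀adj : ∀ v w, C v = c₁ → C w = c₂ → G.Adj (f₀ v) (f₀ w) := by
    intro v w h1 h2
    rw [hf₀]
    simp only [dif_pos h1, dif_neg (show ¬ C w = c₁ by rw [h2]; exact fun h => hc h.symm),
      dif_pos h2]
    have := hg (show (completeBipartiteGraph (Fin s) (Fin t)).Adj
      (Sum.inl (eS ⟨v, by simp [h1]⟩)) (Sum.inr (eT ⟨w, by simp [h2]⟩)) by simp)
    simpa using this
  -- the base class set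
  set B : Finset γ := univ.filter (fun v => C v = c₁ ∨ C v = c₂) with hB
  -- the greedy extension
  have key : ∀ D : Finset γ, ∃ f : γ → V,
      (∀ v ∈ B, f v = f₀ v) ∧
      Set.InjOn f ↑(B ∪ D) ∧
      (∀ v ∈ B ∪ D, P (f v) = π (C v)) ∧
      (∀ u ∈ B ∪ D, ∀ v ∈ B ∪ D, F.Adj u v → G.Adj (f u) (f v)) := by
    intro D
    induction D using Finset.induction_on with
    | empty =>
      refine ⟨f₀, fun v _ => rfl, ?_, ?_, ?_⟩
      · intro x hx y hy heq
        simp only [Finset.union_empty, Finset.coe_filter, Set.mem_setOf_eq, hB,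
          Finset.mem_coe, Finset.mem_filter] at hx hy
        exact hf₀inj x y hx.2 hy.2 heq
      · intro v hv
        simp only [Finset.union_empty, hB, Finset.mem_filter] at hv
        rcases hv.2 with h1 | h2
        · rw [hf₀P v (Or.inl h1), h1, hπ₁]
        · rw [hf₀P v (Or.inr h2), h2, hπ₂]
      · intro u hu v hv huv
        simp only [Finset.union_empty, hB, Finset.mem_filter] at hu hv
        have hne := C.valid huv
        rcases hu.2 with h1 | h2 <;> rcases hv.2 with h1' | h2'
        · exact absurd (h1.trans h1'.symm) hne
        · exact hf₀adj u v h1 h2'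
        · exact (hf₀adj v u h1' h2).symm
        · exact absurd (h2.trans h2'.symm) hne
    | @insert u D huD ih =>
      obtain ⟨f, hf1, hf2, hf3, hf4⟩ := ih
      by_cases huB : u ∈ B
      · refine ⟨f, hf1, ?_, ?_, ?_⟩
        · have : B ∪ insert u D = B ∪ D := by
            rw [Finset.union_comm, Finset.union_comm B D, Finset.insert_union,
              Finset.insert_eq_of_mem (Finset.mem_union_right D huB)]
          rw [this]; exact hf2
        · intro v hv
          rcases Finset.mem_union.mp hv with hvB | hvD
          · exact hf3 v (Finset.mem_union_left _ hvB)
          · rcases Finset.mem_insert.mp hvD with h | h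
            · exact h ▸ hf3 u (Finset.mem_union_left _ huB)
            · exact hf3 v (Finset.mem_union_right _ h)
        · intro a ha b hb hab
          have hmem : ∀ x, x ∈ B ∪ insert u D → x ∈ B ∪ D := by
            intro x hx
            rcases Finset.mem_union.mp hx with h | h
            · exact Finset.mem_union_left _ h
            · rcases Finset.mem_insert.mp h with h' | h'
              · exact h' ▸ Finset.mem_union_left _ huB
              · exact Finset.mem_union_right _ h'
          exact hf4 a (hmem a ha) b (hmem b hb) hab
      · -- the real greedy step
        have hc1 : C u ≠ c₁ := fun h => huB (by simp [hB, h])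
        have hc2 : C u ≠ c₂ := fun h => huB (by simp [hB, h])
        set j := π (C u) with hj
        have hji : j ≠ i := hπ₃ _ hc1 hc2
        set Aj : Finset V := univ.filter (fun w => P w = j) with hAj
        set T₁ : Finset V := (B ∪ D).image f with hT₁
        set Nbr : Finset γ := (B ∪ D).filter (fun x => F.Adj u x) with hNbr
        set T₂ : Finset V := Nbr.biUnion (fun x => Aj.filter (fun w => ¬ G.Adj (f x) w))
          with hT₂def
        -- each previously placed vertex lies in the part given by π
        have hparts : ∀ x ∈ B ∪ D, P (f x) = π (C x) := hf3
        -- cardinality facts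
        have hBD : (B ∪ D).card ≤ n - 1 := by
          have : B ∪ D ⊆ univ.erase u := by
            intro x hx
            refine Finset.mem_erase.mpr ⟨?_, Finset.mem_univ x⟩
            rintro rfl
            rcases Finset.mem_union.mp hx with h | h
            exacts [huB h, huD h]
          calc (B ∪ D).card ≤ (univ.erase u).card := Finset.card_le_card this
            _ = n - 1 := by rw [Finset.card_erase_of_mem (Finset.mem_univ u), Finset.card_univ]
        have hAcard : (n : ℝ)^2 ≤ (Aj.card : ℝ) := by
          have := hsize j
          have heq : {v | P v = j} = ↑Aj := by ext; simp [hAj]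
          rw [heq, Set.ncard_coe_finset] at this
          exact_mod_cast this
        have hT₁card : (T₁.card : ℝ) ≤ (n : ℝ) - 1 := by
          have h1 : T₁.card ≤ (B ∪ D).card := Finset.card_image_le
          have h2 : T₁.card ≤ n - 1 := h1.trans hBD
          have : (T₁.card : ℝ) ≤ ((n - 1 : ℕ) : ℝ) := by exact_mod_cast h2
          calc (T₁.card : ℝ) ≤ ((n - 1 : ℕ) : ℝ) := this
            _ ≤ (n : ℝ) - 1 := by
              rw [Nat.cast_sub hn]; simp
        have hT₂card : (T₂.card : ℝ) ≤ ((n : ℝ) - 1) * ((Aj.card : ℝ) / n) := by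
          have hbd : ∀ x ∈ Nbr, ((Aj.filter (fun w => ¬ G.Adj (f x) w)).card : ℝ)
              ≤ (Aj.card : ℝ) / n := by
            intro x hx
            rw [hNbr, Finset.mem_filter] at hx
            have hCx : C x ≠ C u := fun h => (C.valid hx.2) (h.symm)
            have hPx : P (f x) = π (C x) := hparts x hx.1
            have hπx : π (C x) ≠ j := by
              rw [hj]
              by_cases h1 : C x = c₁
              · rw [h1, hπ₁]; exact fun h => hji h.symm
              by_cases h2 : C x = c₂
              · rw [h2, hπ₂]; exact fun h => hji h.symm
              exact fun h => hCx (hπ₄ _ _ h1 h2 hc1 hc2 h)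
            have := hadj (π (C x)) j hπx (f x) hPx
            have heq1 : {w | P w = j ∧ ¬ G.Adj (f x) w}
                = ↑(Aj.filter (fun w => ¬ G.Adj (f x) w)) := by
              ext w; simp [hAj, and_assoc]
            have heq2 : {w | P w = j} = ↑Aj := by ext; simp [hAj]
            rw [heq1, heq2, Set.ncard_coe_finset, Set.ncard_coe_finset] at this
            exact this
          have h1 : T₂.card ≤ ∑ x ∈ Nbr, (Aj.filter (fun w => ¬ G.Adj (f x) w)).card :=
            Finset.card_biUnion_le
          have h2 : (∑ x ∈ Nbr, ((Aj.filter (fun w => ¬ G.Adj (f x) w)).card : ℝ))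
              ≤ Nbr.card • ((Aj.card : ℝ) / n) := Finset.sum_le_card_nsmul _ _ _ hbd
          have hNbrcard : (Nbr.card : ℝ) ≤ (n : ℝ) - 1 := by
            have : Nbr.card ≤ (B ∪ D).card := Finset.card_filter_le _ _
            have h3 : Nbr.card ≤ n - 1 := this.trans hBD
            have : (Nbr.card : ℝ) ≤ ((n - 1 : ℕ) : ℝ) := by exact_mod_cast h3
            calc (Nbr.card : ℝ) ≤ ((n - 1 : ℕ) : ℝ) := this
              _ ≤ (n : ℝ) - 1 := by rw [Nat.cast_sub hn]; simp
          have hAn : (0 : ℝ) ≤ (Aj.card : ℝ) / n := by positivity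
          calc (T₂.card : ℝ) ≤ ∑ x ∈ Nbr, ((Aj.filter (fun w => ¬ G.Adj (f x) w)).card : ℝ) := by
                exact_mod_cast h1
            _ ≤ Nbr.card • ((Aj.card : ℝ) / n) := h2
            _ = (Nbr.card : ℝ) * ((Aj.card : ℝ) / n) := by rw [nsmul_eq_mul]
            _ ≤ ((n : ℝ) - 1) * ((Aj.card : ℝ) / n) := by
                exact mul_le_mul_of_nonneg_right hNbrcard hAn
        -- find a good vertex w
        have hlt : (T₁ ∪ T₂).card < Aj.card := by
          have hnR : (1 : ℝ) ≤ n := by exact_mod_cast hn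
          have h1 : ((T₁ ∪ T₂).card : ℝ) ≤ (T₁.card : ℝ) + T₂.card := by
            exact_mod_cast Finset.card_union_le T₁ T₂
          have hfin : ((T₁ ∪ T₂).card : ℝ) < (Aj.card : ℝ) :=
            stmt_1_arith n (Aj.card) (T₁.card) (T₂.card) _ hnR hAcard hT₁card hT₂card h1
          exact_mod_cast hfin
        have hexw : ∃ w ∈ Aj, w ∉ T₁ ∪ T₂ := by
          by_contra hcon
          push_neg at hcon
          exact absurd (Finset.card_le_card hcon) (not_le.mpr hlt)
        obtain ⟨w, hwA, hwT⟩ := hexw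
        have hwT₁ : w ∉ T₁ := fun h => hwT (Finset.mem_union_left _ h)
        have hwT₂ : w ∉ T₂ := fun h => hwT (Finset.mem_union_right _ h)
        have hwP : P w = j := by simpa [hAj] using hwA
        have hwadj : ∀ x ∈ B ∪ D, F.Adj u x → G.Adj (f x) w := by
          intro x hx hux
          by_contra hna
          apply hwT₂
          rw [hT₂def]
          apply Finset.mem_biUnion.mpr
          exact ⟨x, by rw [hNbr]; exact Finset.mem_filter.mpr ⟨hx, hux⟩,
            Finset.mem_filter.mpr ⟨hwA, hna⟩⟩
        refine ⟨Function.update f u w, ?_, ?_, ?_, ?_⟩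
        · intro v hv
          rw [Function.update_of_ne (show v ≠ u by rintro rfl; exact huB hv) _ _]
          exact hf1 v hv
        · have hset : (↑(B ∪ insert u D) : Set γ) = insert u ↑(B ∪ D) := by
            ext x; simp [Finset.mem_union, Finset.mem_insert, or_comm, or_left_comm]
          rw [hset]
          have huBD : u ∉ B ∪ D := fun h => (Finset.mem_union.mp h).elim huB huD
          intro x hx y hy heq
          rcases Set.mem_insert_iff.mp hx with hxu | hx' <;>
            rcases Set.mem_insert_iff.mp hy with hyu | hy'
          · rw [hxu, hyu]
          · exfalso
            have hyu : y ≠ u := fun h => huBD (h ▸ Finset.mem_coe.mp hy')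
            rw [hxu, Function.update_self, Function.update_of_ne hyu] at heq
            exact hwT₁ (by rw [hT₁]; exact Finset.mem_image.mpr ⟨y, Finset.mem_coe.mp hy', heq.symm⟩)
          · exfalso
            have hxu : x ≠ u := fun h => huBD (h ▸ Finset.mem_coe.mp hx')
            rw [hyu, Function.update_self, Function.update_of_ne hxu] at heq
            exact hwT₁ (by rw [hT₁]; exact Finset.mem_image.mpr ⟨x, Finset.mem_coe.mp hx', heq⟩)
          · have hxu : x ≠ u := fun h => huBD (h ▸ Finset.mem_coe.mp hx')
            have hyu : y ≠ u := fun h => huBD (h ▸ Finset.mem_coe.mp hy')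
            rw [Function.update_of_ne hxu, Function.update_of_ne hyu] at heq
            exact hf2 hx' hy' heq
        · intro v hv
          by_cases hvu : v = u
          · subst hvu
            rw [Function.update_self, hwP, hj]
          · rw [Function.update_of_ne hvu]
            apply hf3
            rcases Finset.mem_union.mp hv with h | h
            · exact Finset.mem_union_left _ h
            · rcases Finset.mem_insert.mp h with h' | h'
              · exact absurd h' hvu
              · exact Finset.mem_union_right _ h'
        · intro a ha b hb hab
          have hmem : ∀ x, x ∈ B ∪ insert u D → x = u ∨ x ∈ B ∪ D := by
            intro x hx
            rcases Finset.mem_union.mp hx with h | h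
            · exact Or.inr (Finset.mem_union_left _ h)
            · rcases Finset.mem_insert.mp h with h' | h'
              · exact Or.inl h'
              · exact Or.inr (Finset.mem_union_right _ h')
          have huBD : u ∉ B ∪ D := fun h => (Finset.mem_union.mp h).elim huB huD
          rcases hmem a ha with hau | ha' <;> rcases hmem b hb with hbu | hb'
          · rw [hau, hbu] at hab
            exact absurd hab (F.loopless.irrefl u)
          · have hbu : b ≠ u := fun h => huBD (h ▸ hb')
            rw [hau, Function.update_self, Function.update_of_ne hbu]
            rw [hau] at hab
            exact (hwadj b hb' hab).symm
          · have hau' : a ≠ u := fun h => huBD (h ▸ ha')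
            rw [hbu, Function.update_self, Function.update_of_ne hau']
            rw [hbu] at hab
            exact hwadj a ha' (F.symm.symm _ _ hab)
          · have hau' : a ≠ u := fun h => huBD (h ▸ ha')
            have hbu' : b ≠ u := fun h => huBD (h ▸ hb')
            rw [Function.update_of_ne hau', Function.update_of_ne hbu']
            exact hf4 a ha' b hb' hab
  -- conclude
  obtain ⟨f, _, hinj, _, hadjf⟩ := key Finset.univ
  refine ⟨⟨f, ?_⟩, ?_⟩
  · intro a b heq
    exact hinj (Finset.mem_coe.mpr (Finset.mem_union_right _ (Finset.mem_univ a)))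
      (Finset.mem_coe.mpr (Finset.mem_union_right _ (Finset.mem_univ b))) heq
  · intro a b hab
    exact hadjf a (Finset.mem_union_right _ (Finset.mem_univ a)) b
      (Finset.mem_union_right _ (Finset.mem_univ b)) hab
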